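/- (Torus exotic symbol, symbol class part) Let κ > 0 and define a : ℤⁿ → ℝ by a(ξ) = ⟨ξ⟩^{-κ} if ξ = 2^k e₁ for some k ∈ ℕ, and a(ξ) = 0 otherwise. Then for every multi-index α ∈ ℕ₀ⁿ there is a constant C_α with |Δ^α a(ξ)| ≤ C_α (1+|ξ|)^{-κ} for all ξ ∈ ℤⁿ, where Δ^α is the forward difference operator; moreover, for ξ_k = 2^k e₁ one has |Δ^{e₁} a(ξ_k)| = ⟨ξ_k⟩^{-κ}, so no estimate of the form |Δ^{e₁} a(ξ)| ≤ C (1+|ξ|)^{-κ-ε} with ε > 0 can hold. -/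

import Mathlib

/-- The Japanese bracket `⟨ξ⟩ = (1 + |ξ|²)^{1/2}` on `ℤⁿ`. -/
noncomputable def jb {n : ℕ} (ξ : Fin n → ℤ) : ℝ :=
  Real.sqrt (1 + ∑ j, ((ξ j : ℝ)) ^ 2)

/-- `|ξ|`, the Euclidean norm on `ℤⁿ`. -/
noncomputable def znorm {n : ℕ} (ξ : Fin n → ℤ) : ℝ :=
  Real.sqrt (∑ j, ((ξ j : ℝ)) ^ 2)

open Classical in
/-- The exotic symbol: `a(ξ) = ⟨ξ⟩^{-κ}` if `ξ = 2^k e₁` for some `k ∈ ℕ`, else `0`. -/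
noncomputable def exoticSymbol (n : ℕ) (hn : 0 < n) (κ : ℝ) : (Fin n → ℤ) → ℝ :=
  fun ξ =>
    if ∃ k : ℕ, ξ = fun j => 2 ^ k * (Pi.single (⟨0, hn⟩ : Fin n) (1 : ℤ) : Fin n → ℤ) j
    then jb ξ ^ (-κ) else 0

/-- The iterated forward difference operator `Δ^α` on functions on `ℤⁿ`, written in
its standard closed form `Δ^α f(ξ) = ∑_{β ≤ α} (-1)^{|α|-|β|} binom(α,β) f(ξ+β)`. -/
noncomputable def fdiff {n : ℕ} (α : Fin n → ℕ) (f : (Fin n → ℤ) → ℝ)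
    (ξ : Fin n → ℤ) : ℝ :=
  ∑ β : (∀ j, Fin (α j + 1)),
    ((-1 : ℝ) ^ (∑ j, (α j - (β j : ℕ))) * ∏ j, (α j).choose (β j)) *
      f (ξ + fun j => ((β j : ℕ) : ℤ))


lemma jb_ge_one {n : ℕ} (ξ : Fin n → ℤ) : 1 ≤ jb ξ := by
  rw [jb]
  have : (0:ℝ) ≤ ∑ j, ((ξ j : ℝ)) ^ 2 := Finset.sum_nonneg fun j _ => sq_nonneg _
  exact Real.le_sqrt_of_sq_le (by linarith)

lemma jb_pos {n : ℕ} (ξ : Fin n → ℤ) : 0 < jb ξ := lt_of_lt_of_le one_pos (jb_ge_one ξ)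

lemma znorm_nonneg {n : ℕ} (ξ : Fin n → ℤ) : 0 ≤ znorm ξ := Real.sqrt_nonneg _

lemma znorm_le_jb {n : ℕ} (ξ : Fin n → ℤ) : znorm ξ ≤ jb ξ :=
  Real.sqrt_le_sqrt (by linarith [Finset.sum_nonneg (fun j (_ : j ∈ Finset.univ) => sq_nonneg ((ξ j : ℝ)))])

lemma one_add_znorm_le_two_jb {n : ℕ} (ξ : Fin n → ℤ) : 1 + znorm ξ ≤ 2 * jb ξ := by
  linarith [jb_ge_one ξ, znorm_le_jb ξ]

lemma znorm_triangle {n : ℕ} (ξ b : Fin n → ℤ) :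
    znorm ξ ≤ znorm (ξ + b) + znorm b := by
  set x : EuclideanSpace ℝ (Fin n) := (WithLp.equiv 2 _).symm (fun j => (((ξ + b) j : ℤ) : ℝ)) with hxdef
  set y : EuclideanSpace ℝ (Fin n) := (WithLp.equiv 2 _).symm (fun j => ((b j : ℤ) : ℝ)) with hydef
  have hx : ‖x‖ = znorm (ξ + b) := by
    rw [EuclideanSpace.norm_eq, znorm]
    congr 1
    refine Finset.sum_congr rfl fun j _ => ?_
    simp [hxdef, Real.norm_eq_abs, sq_abs]
  have hy : ‖y‖ = znorm b := by
    rw [EuclideanSpace.norm_eq, znorm]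
    congr 1
    refine Finset.sum_congr rfl fun j _ => ?_
    simp [hydef, Real.norm_eq_abs, sq_abs]
  have hs : ‖x - y‖ = znorm ξ := by
    rw [EuclideanSpace.norm_eq, znorm]
    congr 1
    refine Finset.sum_congr rfl fun j _ => ?_
    have : (x - y) j = (ξ j : ℝ) := by
      simp [hxdef, hydef, WithLp.equiv, Equiv.refl_apply, sub_eq_iff_eq_add]
    simp [this, Real.norm_eq_abs, sq_abs]
  calc znorm ξ = ‖x - y‖ := hs.symm
    _ ≤ ‖x‖ + ‖y‖ := norm_sub_le x y
    _ = znorm (ξ + b) + znorm b := by rw [hx, hy]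


lemma abs_exotic_le {n : ℕ} (hn : 0 < n) (κ : ℝ) (ξ : Fin n → ℤ) :
    |exoticSymbol n hn κ ξ| ≤ jb ξ ^ (-κ) := by
  rw [exoticSymbol]
  split_ifs with h
  · rw [abs_of_nonneg (Real.rpow_nonneg (jb_pos ξ).le _)]
  · simpa using (Real.rpow_nonneg (jb_pos ξ).le (-κ))

lemma znorm_le_sum {n : ℕ} (c : Fin n → ℕ) :
    znorm (fun j => (c j : ℤ)) ≤ (∑ j, (c j : ℝ)) := by
  rw [znorm]
  have h1 : ∑ j, (((c j : ℤ) : ℝ)) ^ 2 ≤ (∑ j, (c j : ℝ)) ^ 2 := by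
    push_cast
    exact Finset.sum_sq_le_sq_sum_of_nonneg (fun j _ => by positivity)
  have h2 : (0:ℝ) ≤ ∑ j, (c j : ℝ) := Finset.sum_nonneg fun j _ => by positivity
  calc Real.sqrt (∑ j, (((c j : ℤ)):ℝ) ^ 2) ≤ Real.sqrt ((∑ j, (c j : ℝ)) ^ 2) :=
        Real.sqrt_le_sqrt h1
    _ = ∑ j, (c j : ℝ) := Real.sqrt_sq h2

/-- Key comparison: if `η = ξ + b` with `znorm b ≤ M`, then `jb η ^ (-κ) ≤ (2*(1+M))^κ * (1+znorm ξ)^(-κ)`. -/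
lemma key_compare {n : ℕ} (κ : ℝ) (hκ : 0 < κ) (M : ℝ) (hM : 0 ≤ M)
    (ξ b : Fin n → ℤ) (hb : znorm b ≤ M) :
    jb (ξ + b) ^ (-κ) ≤ (2 * (1 + M)) ^ κ * (1 + znorm ξ) ^ (-κ) := by
  set η := ξ + b with hη
  have h1 : 1 + znorm ξ ≤ (1 + M) * (2 * jb η) := by
    have t := znorm_triangle ξ b
    have t2 := one_add_znorm_le_two_jb η
    have hj := jb_ge_one η
    nlinarith [znorm_nonneg η]
  have hpos : (0:ℝ) < 1 + znorm ξ := by linarith [znorm_nonneg ξ]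
  have h2 : (( (1 + M) * (2 * jb η)) : ℝ) ^ (-κ) ≤ (1 + znorm ξ) ^ (-κ) :=
    Real.rpow_le_rpow_of_nonpos hpos h1 (by linarith)
  have hM2 : (0:ℝ) < 2 * (1 + M) := by linarith
  have h3 : ((1 + M) * (2 * jb η)) ^ (-κ) = (2 * (1 + M)) ^ (-κ) * jb η ^ (-κ) := by
    rw [show (1 + M) * (2 * jb η) = (2 * (1 + M)) * jb η by ring,
      Real.mul_rpow hM2.le (jb_pos η).le]
  have h4 : (2 * (1 + M)) ^ κ * ((2 * (1 + M)) ^ (-κ) * jb η ^ (-κ)) = jb η ^ (-κ) := by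
    rw [← mul_assoc, ← Real.rpow_add hM2]
    simp
  calc jb η ^ (-κ) = (2 * (1 + M)) ^ κ * ((1 + M) * (2 * jb η)) ^ (-κ) := by
        rw [h3, h4]
    _ ≤ (2 * (1 + M)) ^ κ * (1 + znorm ξ) ^ (-κ) := by
        exact mul_le_mul_of_nonneg_left h2 (Real.rpow_nonneg hM2.le κ)

lemma part1 {n : ℕ} (hn : 0 < n) (κ : ℝ) (hκ : 0 < κ) (α : Fin n → ℕ) :
    ∃ C : ℝ, 0 < C ∧ ∀ ξ : Fin n → ℤ,
      |fdiff α (exoticSymbol n hn κ) ξ| ≤ C * (1 + znorm ξ) ^ (-κ) := by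
  set M : ℝ := ∑ j, (α j : ℝ) with hMdef
  have hM : 0 ≤ M := Finset.sum_nonneg fun j _ => by positivity
  set S : ℝ := ∑ β : (∀ j, Fin (α j + 1)),
      |(-1 : ℝ) ^ (∑ j, (α j - (β j : ℕ))) * ((∏ j, (α j).choose (β j) : ℕ) : ℝ)| with hSdef
  have hS : 0 ≤ S := Finset.sum_nonneg fun β _ => abs_nonneg _
  refine ⟨S * (2 * (1 + M)) ^ κ + 1, by positivity, fun ξ => ?_⟩
  have hX : (0:ℝ) ≤ (1 + znorm ξ) ^ (-κ) :=
    Real.rpow_nonneg (by linarith [znorm_nonneg ξ]) _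
  have main : |fdiff α (exoticSymbol n hn κ) ξ| ≤ S * ((2 * (1 + M)) ^ κ * (1 + znorm ξ) ^ (-κ)) := by
    rw [fdiff]
    calc |∑ β : (∀ j, Fin (α j + 1)),
          ((-1 : ℝ) ^ (∑ j, (α j - (β j : ℕ))) * ((∏ j, (α j).choose (β j) : ℕ) : ℝ)) *
            exoticSymbol n hn κ (ξ + fun j => ((β j : ℕ) : ℤ))|
        ≤ ∑ β : (∀ j, Fin (α j + 1)),
          |((-1 : ℝ) ^ (∑ j, (α j - (β j : ℕ))) * ((∏ j, (α j).choose (β j) : ℕ) : ℝ)) *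
            exoticSymbol n hn κ (ξ + fun j => ((β j : ℕ) : ℤ))| :=
          Finset.abs_sum_le_sum_abs _ _
      _ ≤ ∑ β : (∀ j, Fin (α j + 1)),
          |(-1 : ℝ) ^ (∑ j, (α j - (β j : ℕ))) * ((∏ j, (α j).choose (β j) : ℕ) : ℝ)| *
            ((2 * (1 + M)) ^ κ * (1 + znorm ξ) ^ (-κ)) := by
          refine Finset.sum_le_sum fun β _ => ?_
          rw [abs_mul]
          refine mul_le_mul_of_nonneg_left ?_ (abs_nonneg _)
          refine le_trans (abs_exotic_le hn κ _) ?_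
          refine key_compare κ hκ M hM ξ _ ?_
          refine le_trans (znorm_le_sum (fun j => (β j : ℕ))) ?_
          refine Finset.sum_le_sum fun j _ => ?_
          exact_mod_cast Nat.cast_le.mpr (Nat.lt_succ_iff.mp (β j).isLt)
      _ = S * ((2 * (1 + M)) ^ κ * (1 + znorm ξ) ^ (-κ)) := by
          rw [hSdef, Finset.sum_mul]
  calc |fdiff α (exoticSymbol n hn κ) ξ|
      ≤ S * ((2 * (1 + M)) ^ κ * (1 + znorm ξ) ^ (-κ)) := main
    _ = (S * (2 * (1 + M)) ^ κ) * (1 + znorm ξ) ^ (-κ) := by ring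
    _ ≤ (S * (2 * (1 + M)) ^ κ + 1) * (1 + znorm ξ) ^ (-κ) := by
        exact mul_le_mul_of_nonneg_right (by linarith) hX

def singleEquiv {n : ℕ} (i : Fin n) :
    (∀ j, Fin ((Pi.single i (1:ℕ) : Fin n → ℕ) j + 1)) ≃ Fin 2 where
  toFun β := ⟨(β i : ℕ), by have := (β i).isLt; simpa using this⟩
  invFun b := fun j => ⟨if j = i then (b : ℕ) else 0, by
    split_ifs with h
    · subst h; simpa using b.isLt
    · exact Nat.succ_pos _⟩
  left_inv β := by
    funext j
    apply Fin.ext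
    simp only
    split_ifs with h
    · subst h; rfl
    · have := (β j).isLt
      have e : (Pi.single i (1:ℕ) : Fin n → ℕ) j = 0 := Pi.single_eq_of_ne h 1
      omega
  right_inv b := by apply Fin.ext; simp

lemma fdiff_single {n : ℕ} (i : Fin n) (f : (Fin n → ℤ) → ℝ) (ξ : Fin n → ℤ) :
    fdiff (Pi.single i 1) f ξ = f (ξ + fun j => (((Pi.single i (1:ℕ) : Fin n → ℕ) j : ℕ) : ℤ)) - f ξ := by
  rw [fdiff, ← Equiv.sum_comp (singleEquiv i).symm]
  rw [Fin.sum_univ_two]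
  have eval : ∀ (b : Fin 2) (j : Fin n),
      (((singleEquiv i).symm b j : ℕ)) = if j = i then (b : ℕ) else 0 := fun b j => rfl
  have h0 : ∀ j : Fin n, (((singleEquiv i).symm 0 j : ℕ)) = 0 := by
    intro j; rw [eval]; simp
  have h1 : ∀ j : Fin n, (((singleEquiv i).symm 1 j : ℕ)) = (Pi.single i (1:ℕ) : Fin n → ℕ) j := by
    intro j; rw [eval]
    by_cases h : j = i
    · subst h; simp
    · rw [if_neg h, Pi.single_eq_of_ne h]
  have sum0 : (∑ j, ((Pi.single i (1:ℕ) : Fin n → ℕ) j - (((singleEquiv i).symm 0 j : ℕ)))) = 1 := by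
    rw [Finset.sum_congr rfl (fun j _ => by rw [h0 j, Nat.sub_zero])]
    simp [Finset.sum_pi_single]
  have sum1 : (∑ j, ((Pi.single i (1:ℕ) : Fin n → ℕ) j - (((singleEquiv i).symm 1 j : ℕ)))) = 0 := by
    refine Finset.sum_eq_zero fun j _ => by rw [h1 j, Nat.sub_self]
  have prod0 : (∏ j, ((Pi.single i (1:ℕ) : Fin n → ℕ) j).choose (((singleEquiv i).symm 0 j : ℕ))) = 1 := by
    refine Finset.prod_eq_one fun j _ => ?_
    rw [h0 j]; exact Nat.choose_zero_right _
  have prod1 : (∏ j, ((Pi.single i (1:ℕ) : Fin n → ℕ) j).choose (((singleEquiv i).symm 1 j : ℕ))) = 1 := by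
    refine Finset.prod_eq_one fun j _ => ?_
    rw [h1 j]; exact Nat.choose_self _
  have arg0 : (ξ + fun j => ((((singleEquiv i).symm 0 j : ℕ)) : ℤ)) = ξ := by
    funext j
    show ξ j + ((((singleEquiv i).symm 0 j : ℕ)) : ℤ) = ξ j
    rw [h0 j]; simp
  have arg1 : (ξ + fun j => ((((singleEquiv i).symm 1 j : ℕ)) : ℤ))
      = ξ + fun j => (((Pi.single i (1:ℕ) : Fin n → ℕ) j : ℕ) : ℤ) := by
    funext j
    show ξ j + ((((singleEquiv i).symm 1 j : ℕ)) : ℤ) = ξ j + (((Pi.single i (1:ℕ) : Fin n → ℕ) j : ℕ) : ℤ)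
    rw [h1 j]
  rw [sum0, sum1, prod0, prod1, arg0, arg1]
  push_cast
  ring

lemma pow_ne_succ_pow (k m : ℕ) (hk : 1 ≤ k) : (2:ℤ) ^ k + 1 ≠ 2 ^ m := by
  obtain ⟨k', rfl⟩ : ∃ k', k = k' + 1 := ⟨k - 1, by omega⟩
  have h2 : (2:ℤ) ^ (k' + 1) = 2 * 2 ^ k' := by ring
  have hp : (0:ℤ) < 2 ^ k' := pow_pos (by norm_num) k'
  cases m with
  | zero => simp only [pow_zero]; omega
  | succ m' =>
    have h3 : (2:ℤ) ^ (m' + 1) = 2 * 2 ^ m' := by ring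
    have hp' : (0:ℤ) < 2 ^ m' := pow_pos (by norm_num) m'
    omega

lemma part2 {n : ℕ} (hn : 0 < n) (κ : ℝ) (k : ℕ) (hk : 1 ≤ k) :
    |fdiff (Pi.single (⟨0, hn⟩ : Fin n) 1) (exoticSymbol n hn κ)
        (fun j => 2 ^ k * (Pi.single (⟨0, hn⟩ : Fin n) (1 : ℤ) : Fin n → ℤ) j)|
      = jb (fun j => 2 ^ k * (Pi.single (⟨0, hn⟩ : Fin n) (1 : ℤ) : Fin n → ℤ) j) ^ (-κ) := by
  set i : Fin n := ⟨0, hn⟩ with hi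
  set ξk : Fin n → ℤ := fun j => 2 ^ k * (Pi.single i (1 : ℤ) : Fin n → ℤ) j with hξk
  rw [fdiff_single]
  have hval : exoticSymbol n hn κ ξk = jb ξk ^ (-κ) := by
    rw [exoticSymbol, if_pos ⟨k, rfl⟩]
  have hzero : exoticSymbol n hn κ (ξk + fun j => (((Pi.single i (1:ℕ) : Fin n → ℕ) j : ℕ) : ℤ)) = 0 := by
    rw [exoticSymbol, if_neg]
    rintro ⟨m, hm⟩
    have := congrFun hm i
    simp only [Pi.add_apply, hξk, ← hi, Pi.single_eq_same] at this
    exact pow_ne_succ_pow k m hk (by push_cast at this ⊢; linarith)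
  rw [hval, hzero, zero_sub, abs_neg,
    abs_of_nonneg (Real.rpow_nonneg (jb_pos ξk).le _)]

lemma znorm_xi {n : ℕ} (hn : 0 < n) (k : ℕ) :
    znorm (fun j => 2 ^ k * (Pi.single (⟨0, hn⟩ : Fin n) (1 : ℤ) : Fin n → ℤ) j)
      = (2:ℝ) ^ k := by
  set i : Fin n := ⟨0, hn⟩ with hi
  rw [znorm]
  have hsum : ∑ j, (((2 ^ k * (Pi.single i (1 : ℤ) : Fin n → ℤ) j : ℤ)) : ℝ) ^ 2
      = ((2:ℝ) ^ k) ^ 2 := by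
    rw [Finset.sum_eq_single i]
    · simp
    · intro j _ hj
      simp [Pi.single_eq_of_ne hj]
    · intro h; exact absurd (Finset.mem_univ i) h
  rw [hsum, Real.sqrt_sq (by positivity)]

lemma jb_xi_le {n : ℕ} (hn : 0 < n) (k : ℕ) :
    jb (fun j => 2 ^ k * (Pi.single (⟨0, hn⟩ : Fin n) (1 : ℤ) : Fin n → ℤ) j)
      ≤ 1 + (2:ℝ) ^ k := by
  have hz := znorm_xi hn k
  rw [znorm] at hz
  rw [jb]
  have h2 : (0:ℝ) ≤ ∑ j, (((2 ^ k * (Pi.single (⟨0, hn⟩ : Fin n) (1 : ℤ) : Fin n → ℤ) j : ℤ)) : ℝ) ^ 2 :=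
    Finset.sum_nonneg fun j _ => sq_nonneg _
  have h3 : ∑ j, (((2 ^ k * (Pi.single (⟨0, hn⟩ : Fin n) (1 : ℤ) : Fin n → ℤ) j : ℤ)) : ℝ) ^ 2
      = ((2:ℝ) ^ k) ^ 2 := by
    rw [← Real.sq_sqrt h2, hz]
  rw [h3]
  have hp : (0:ℝ) ≤ 2 ^ k := by positivity
  calc Real.sqrt (1 + ((2:ℝ) ^ k) ^ 2) ≤ Real.sqrt ((1 + (2:ℝ) ^ k) ^ 2) :=
        Real.sqrt_le_sqrt (by nlinarith)
    _ = 1 + (2:ℝ) ^ k := Real.sqrt_sq (by positivity)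

lemma part3 {n : ℕ} (hn : 0 < n) (κ : ℝ) (hκ : 0 < κ) (ε : ℝ) (hε : 0 < ε) :
    ¬ ∃ C : ℝ, ∀ ξ : Fin n → ℤ,
      |fdiff (Pi.single (⟨0, hn⟩ : Fin n) 1) (exoticSymbol n hn κ) ξ|
        ≤ C * (1 + znorm ξ) ^ (-κ - ε) := by
  rintro ⟨C, hC⟩
  -- For all k ≥ 1, (1 + 2^k)^ε ≤ C
  have main : ∀ k : ℕ, 1 ≤ k → (1 + (2:ℝ) ^ k) ^ ε ≤ C := by
    intro k hk
    set ξk : Fin n → ℤ := fun j => 2 ^ k * (Pi.single (⟨0, hn⟩ : Fin n) (1 : ℤ) : Fin n → ℤ) j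
    have heq := part2 hn κ k hk
    have hb := hC ξk
    rw [heq, znorm_xi hn k] at hb
    set t : ℝ := 1 + (2:ℝ) ^ k with ht
    have htpos : (0:ℝ) < t := by positivity
    have hjb1 : jb ξk ^ (-κ) ≥ t ^ (-κ) := by
      refine Real.rpow_le_rpow_of_nonpos (jb_pos ξk) (jb_xi_le hn k) (by linarith)
    have key : t ^ (-κ) ≤ C * t ^ (-κ - ε) := le_trans hjb1.le hb |>.trans (le_refl _)
    calc t ^ ε = t ^ (-κ) * t ^ (κ + ε) := by
          rw [← Real.rpow_add htpos]; ring_nf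
      _ ≤ (C * t ^ (-κ - ε)) * t ^ (κ + ε) := by
          exact mul_le_mul_of_nonneg_right key (Real.rpow_nonneg htpos.le _)
      _ = C * t ^ ((-κ - ε) + (κ + ε)) := by rw [mul_assoc, ← Real.rpow_add htpos]
      _ = C := by norm_num
  have hC1 : (1:ℝ) ≤ C := by
    have h1 := main 1 le_rfl
    calc (1:ℝ) = 1 ^ ε := (Real.one_rpow ε).symm
      _ ≤ (1 + (2:ℝ) ^ 1) ^ ε := Real.rpow_le_rpow zero_le_one (by norm_num) hε.le
      _ ≤ C := h1
  have hC0 : (0:ℝ) < C := by linarith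
  obtain ⟨N, hN⟩ := exists_nat_gt (C ^ (1 / ε))
  have hk1 : 1 ≤ N + 1 := Nat.le_add_left 1 N
  have hlt : C ^ (1 / ε) < 1 + (2:ℝ) ^ (N + 1) := by
    have h2 : (N:ℝ) + 1 ≤ (2:ℝ) ^ (N + 1) := by
      have := Nat.lt_two_pow_self (n := N)
      have : (N:ℝ) < (2:ℝ) ^ N := by exact_mod_cast this
      have h3 : (2:ℝ) ^ (N+1) = 2 * 2 ^ N := by ring
      have h5 : (1:ℝ) ≤ 2 ^ N := one_le_pow₀ (by norm_num)
      nlinarith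
    linarith
  have hfinal : C < (1 + (2:ℝ) ^ (N + 1)) ^ ε := by
    have h4 : (C ^ (1 / ε)) ^ ε = C := by
      rw [← Real.rpow_mul hC0.le, one_div_mul_cancel hε.ne', Real.rpow_one]
    rw [← h4]
    exact Real.rpow_lt_rpow (Real.rpow_nonneg hC0.le _) hlt hε
  exact absurd (main (N + 1) hk1) (not_le.mpr hfinal)


/-- torus exotic symbol, symbol class part: the exotic symbol `a`
satisfies `|Δ^α a(ξ)| ≤ C_α (1+|ξ|)^{-κ}` for every multi-index `α`; moreover for
`ξ_k = 2^k e₁` (`k ≥ 1`) one has `|Δ^{e₁} a(ξ_k)| = ⟨ξ_k⟩^{-κ}`, and consequently no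
estimate `|Δ^{e₁} a(ξ)| ≤ C (1+|ξ|)^{-κ-ε}` with `ε > 0` can hold. -/
theorem exotic_symbol_class
    (n : ℕ) (hn : 0 < n) (κ : ℝ) (hκ : 0 < κ) :
    (∀ α : Fin n → ℕ, ∃ C : ℝ, 0 < C ∧ ∀ ξ : Fin n → ℤ,
        |fdiff α (exoticSymbol n hn κ) ξ| ≤ C * (1 + znorm ξ) ^ (-κ)) ∧
    (∀ k : ℕ, 1 ≤ k →
        |fdiff (Pi.single (⟨0, hn⟩ : Fin n) 1) (exoticSymbol n hn κ)
            (fun j => 2 ^ k * (Pi.single (⟨0, hn⟩ : Fin n) (1 : ℤ) : Fin n → ℤ) j)|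
          = jb (fun j => 2 ^ k * (Pi.single (⟨0, hn⟩ : Fin n) (1 : ℤ) : Fin n → ℤ) j) ^ (-κ)) ∧
    (∀ ε : ℝ, 0 < ε → ¬ ∃ C : ℝ, ∀ ξ : Fin n → ℤ,
        |fdiff (Pi.single (⟨0, hn⟩ : Fin n) 1) (exoticSymbol n hn κ) ξ|
          ≤ C * (1 + znorm ξ) ^ (-κ - ε)) := by
  exact ⟨fun α => part1 hn κ hκ α, fun k hk => part2 hn κ k hk, fun ε hε => part3 hn κ hκ ε hε⟩
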